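/- A map T : ℝⁿ → ℝᵐ is an abstract Uryson operator if and only if there exist functions T_{i,j} : ℝ → ℝ (1 ≤ i ≤ m, 1 ≤ j ≤ n) with T_{i,j}(0) = 0 that map bounded intervals to bounded sets, such that the i-th coordinate of T(x₁,…,xₙ) equals Σ_{j=1}^n T_{i,j}(x_j). -/
import Mathlib


/-- Orthogonal additivity. -/
def IsOrthAdd {E X : Type*} [Lattice E] [AddCommGroup E] [AddCommGroup X]
    (T : E → X) : Prop :=
  ∀ x y : E, |x| ⊓ |y| = 0 → T (x + y) = T x + T y

/-- Order boundedness: order bounded sets are mapped into order bounded sets. -/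
def IsOrderBounded {E F : Type*} [Preorder E] [Preorder F] (T : E → F) : Prop :=
  ∀ a b : E, ∃ c d : F, ∀ x : E, a ≤ x → x ≤ b → c ≤ T x ∧ T x ≤ d

lemma real_inf_abs_zero {x y : ℝ} (h : |x| ⊓ |y| = 0) : x = 0 ∨ y = 0 := by
  rcases le_total |x| |y| with hle | hle
  · exact Or.inl (abs_eq_zero.mp (by rwa [inf_eq_left.mpr hle] at h))
  · exact Or.inr (abs_eq_zero.mp (by rwa [inf_eq_right.mpr hle] at h))

lemma orthadd_sum_single {n m : ℕ} {T : (Fin n → ℝ) → (Fin m → ℝ)}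
    (hT : IsOrthAdd T) (hT0 : T 0 = 0) (x : Fin n → ℝ) (s : Finset (Fin n)) :
    T (∑ j ∈ s, Pi.single j (x j)) = ∑ j ∈ s, T (Pi.single j (x j)) := by
  induction s using Finset.induction with
  | empty => simpa
  | @insert a s ha ih =>
    rw [Finset.sum_insert ha, Finset.sum_insert ha, hT _ _ ?_, ih]
    funext k
    by_cases hk : k = a
    · subst hk
      have h2 : (∑ j ∈ s, Pi.single j (x j)) k = 0 := by
        rw [Finset.sum_apply]
        exact Finset.sum_eq_zero fun j hj =>
          Pi.single_eq_of_ne (by rintro rfl; exact ha hj) _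
      simp only [Pi.inf_apply, Pi.abs_apply, Pi.zero_apply, h2, abs_zero]
      exact inf_eq_right.mpr (abs_nonneg _)
    · simp only [Pi.inf_apply, Pi.abs_apply, Pi.zero_apply,
        Pi.single_eq_of_ne hk, abs_zero]
      exact inf_eq_left.mpr (abs_nonneg _)

/-- `T : ℝⁿ → ℝᵐ` is an abstract Uryson operator iff it is given by a
matrix `(T i j)` of real functions vanishing at `0` and mapping bounded intervals to
bounded sets, via `(T x) i = Σ_j T i j (x j)`. -/
theorem uryson_iff_matrix (n m : ℕ) (T : (Fin n → ℝ) → (Fin m → ℝ)) :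
    (IsOrthAdd T ∧ IsOrderBounded T) ↔
      ∃ Tm : Fin m → Fin n → ℝ → ℝ,
        (∀ i j, Tm i j 0 = 0) ∧
        (∀ i j, ∀ a b : ℝ, ∃ c : ℝ, ∀ r : ℝ, a ≤ r → r ≤ b → |Tm i j r| ≤ c) ∧
        (∀ x : Fin n → ℝ, ∀ i : Fin m, T x i = ∑ j, Tm i j (x j)) := by
  constructor
  · rintro ⟨hadd, hob⟩
    have hT0 : T 0 = 0 := by
      have h := hadd 0 0 (by simp)
      simp only [add_zero] at h
      exact (left_eq_add.mp h)
    refine ⟨fun i j r => T (Pi.single j r) i, ?_, ?_, ?_⟩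
    · intro i j; simp [Pi.single_zero, hT0]
    · intro i j a b
      obtain ⟨c, d, hcd⟩ := hob (Pi.single j (min a 0)) (Pi.single j (max b 0))
      refine ⟨|c i| + |d i|, fun r har hrb => ?_⟩
      have hlo : (Pi.single j (min a 0) : Fin n → ℝ) ≤ Pi.single j r := by
        intro k
        by_cases hk : k = j
        · subst hk; simp only [Pi.single_eq_same]
          exact le_trans (min_le_left _ _) har
        · simp [Pi.single_eq_of_ne hk]
      have hhi : (Pi.single j r : Fin n → ℝ) ≤ Pi.single j (max b 0) := by
        intro k
        by_cases hk : k = j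
        · subst hk; simp only [Pi.single_eq_same]
          exact le_trans hrb (le_max_left _ _)
        · simp [Pi.single_eq_of_ne hk]
      obtain ⟨h1, h2⟩ := hcd _ hlo hhi
      have h1' := h1 i
      have h2' := h2 i
      show |T (Pi.single j r) i| ≤ |c i| + |d i|
      rw [abs_le]
      constructor
      · linarith [neg_abs_le (c i), abs_nonneg (d i)]
      · linarith [le_abs_self (d i), abs_nonneg (c i)]
    · intro x i
      have := orthadd_sum_single hadd hT0 x Finset.univ
      rw [Finset.univ_sum_single x] at this
      rw [this, Finset.sum_apply]
  · rintro ⟨Tm, hz, hb, hrep⟩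
    constructor
    · intro x y h
      funext i
      have hsum : ∀ j, Tm i j (x j + y j) = Tm i j (x j) + Tm i j (y j) := by
        intro j
        have hj : |x j| ⊓ |y j| = 0 := by
          have := congrFun h j
          simpa [Pi.inf_apply] using this
        rcases real_inf_abs_zero hj with h0 | h0 <;> simp [h0, hz]
      simp [hrep, Pi.add_apply, hsum, Finset.sum_add_distrib]
    · intro a b
      choose c hc using fun i j => hb i j (a j) (b j)
      refine ⟨fun i => -∑ j, |c i j|, fun i => ∑ j, |c i j|, fun x hax hxb => ?_⟩
      have key : ∀ i, |T x i| ≤ ∑ j, |c i j| := by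
        intro i
        rw [hrep]
        calc |∑ j, Tm i j (x j)| ≤ ∑ j, |Tm i j (x j)| :=
              Finset.abs_sum_le_sum_abs _ _
          _ ≤ ∑ j, |c i j| := Finset.sum_le_sum fun j _ =>
              le_trans (hc i j (x j) (hax j) (hxb j)) (le_abs_self _)
      constructor
      · intro i
        show -∑ j, |c i j| ≤ T x i
        have h1 := key i
        have h2 := neg_abs_le (T x i)
        linarith
      · intro i
        show T x i ≤ ∑ j, |c i j|
        have h1 := key i
        have h2 := le_abs_self (T x i)
        linarith
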